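/- The map f: C^n → C^n with components f_k(z) = Σ_{A ⊆ {1,...,n}, |A|=k} ( Σ_{j∈A} z_j )^{t_k} · ( ∏_{j∈A} z_j )^{t_k}, for k = 1,...,n, where t is a common multiple of 1,...,n and t_k = t/k, has an isolated zero at the origin: f(z) = 0 implies z = 0. -/

import Mathlib

/-- The map `f : ℂ^n → ℂ^n` with components
`f_k(z) = Σ_{|A| = k} (Σ_{j∈A} z_j)^{t/k} (∏_{j∈A} z_j)^{t/k}`, where `t` is a common multiple
of `1, …, n`, has an isolated zero at the origin: `f(z) = 0` implies `z = 0`. -/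
theorem isolated_zero_of_symmetric_map (n t : ℕ) (hn : 1 ≤ n) (ht : 0 < t)
    (hdvd : ∀ k ∈ Finset.Icc 1 n, k ∣ t) (z : Fin n → ℂ)
    (hz : ∀ k ∈ Finset.Icc 1 n,
      ∑ A ∈ Finset.powersetCard k (Finset.univ : Finset (Fin n)),
        (∑ j ∈ A, z j) ^ (t / k) * (∏ j ∈ A, z j) ^ (t / k) = 0) :
    z = 0 := by
  by_contra hzne
  set S : Finset (Fin n) := Finset.univ.filter (fun j => z j ≠ 0) with hS
  have hmemS : ∀ j, j ∈ S ↔ z j ≠ 0 := by intro j; simp [hS]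
  have hSne : S.Nonempty := by
    rcases Function.ne_iff.1 hzne with ⟨j, hj⟩
    exact ⟨j, (hmemS j).2 (by simpa using hj)⟩
  set m := S.card with hm
  have hm1 : 1 ≤ m := Finset.card_pos.2 hSne
  have hmn : m ≤ n := by
    calc m ≤ Finset.univ.card := Finset.card_le_univ S
    _ = n := by simp
  have hprodS : ∏ j ∈ S, z j ≠ 0 :=
    Finset.prod_ne_zero_iff.2 (fun j hj => (hmemS j).1 hj)
  have hek : ∀ k ∈ Finset.Icc 1 n, t / k ≠ 0 := by
    intro k hk
    rcases Finset.mem_Icc.1 hk with ⟨hk1, _⟩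
    exact (Nat.div_pos (Nat.le_of_dvd ht (hdvd k hk)) hk1).ne'
  have hmIcc : m ∈ Finset.Icc 1 n := Finset.mem_Icc.2 ⟨hm1, hmn⟩
  -- Step 1: the k = m equation forces Σ_{j∈S} z_j = 0.
  have hsumS : ∑ j ∈ S, z j = 0 := by
    have h := hz m hmIcc
    rw [Finset.sum_eq_single S (fun A hA hAne => by
      have hzero : ∃ j ∈ A, z j = 0 := by
        by_contra hc
        push_neg at hc
        have hAS : A ⊆ S := fun j hj => (hmemS j).2 (hc j hj)
        exact hAne (Finset.eq_of_subset_of_card_le hAS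
          (by rw [(Finset.mem_powersetCard.1 hA).2]))
      rcases hzero with ⟨j, hj, hjz⟩
      rw [Finset.prod_eq_zero hj hjz, zero_pow (hek m hmIcc), mul_zero])
      (fun hS' => absurd
        (Finset.mem_powersetCard.2 ⟨Finset.subset_univ S, rfl⟩) hS')] at h
    have hpow : (∑ j ∈ S, z j) ^ (t / m) = 0 := by
      rcases mul_eq_zero.1 h with h' | h'
      · exact h'
      · exact absurd h' (pow_ne_zero _ hprodS)
    exact pow_eq_zero_iff (hek m hmIcc) |>.1 hpow
  rcases eq_or_lt_of_le hm1 with hm1' | hm2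
  · -- m = 1 : contradiction since the single nonzero coordinate sums to 0
    rcases Finset.card_eq_one.1 hm1'.symm with ⟨i, hi⟩
    have hzi : z i ≠ 0 := (hmemS i).1 (by simp [hi])
    exact hzi (by simpa [hi] using hsumS)
  · -- m ≥ 2 : use the k = m-1 equation
    have hkIcc : (m - 1) ∈ Finset.Icc 1 n :=
      Finset.mem_Icc.2 ⟨Nat.le_sub_one_of_lt hm2, le_trans (Nat.sub_le m 1) hmn⟩
    set e := t / (m - 1) with he
    have heo : e ≠ 0 := hek _ hkIcc
    have h := hz (m - 1) hkIcc
    -- restrict the sum to subsets of S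
    have hsplit : ∑ A ∈ Finset.powersetCard (m-1) (Finset.univ : Finset (Fin n)),
        (∑ j ∈ A, z j) ^ e * (∏ j ∈ A, z j) ^ e
        = ∑ A ∈ Finset.powersetCard (m-1) S,
            (∑ j ∈ A, z j) ^ e * (∏ j ∈ A, z j) ^ e := by
      refine (Finset.sum_subset
        (Finset.powersetCard_mono (Finset.subset_univ S)) ?_).symm
      intro A hA hA'
      have hAc : A.card = m - 1 := (Finset.mem_powersetCard.1 hA).2
      have hnsub : ¬ A ⊆ S := fun hsub =>
        hA' (Finset.mem_powersetCard.2 ⟨hsub, hAc⟩)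
      have hzero : ∃ j ∈ A, z j = 0 := by
        by_contra hc
        push_neg at hc
        exact hnsub (fun j hj => (hmemS j).2 (hc j hj))
      rcases hzero with ⟨j, hj, hjz⟩
      rw [Finset.prod_eq_zero hj hjz, zero_pow heo, mul_zero]
    -- reindex the subsets of S of size m-1 by the missing element
    have hbij : ∑ A ∈ Finset.powersetCard (m-1) S,
        (∑ j ∈ A, z j) ^ e * (∏ j ∈ A, z j) ^ e
        = ∑ i ∈ S, (∑ j ∈ S.erase i, z j) ^ e * (∏ j ∈ S.erase i, z j) ^ e := by
      refine (Finset.sum_bij (fun i _ => S.erase i) ?_ ?_ ?_ ?_).symm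
      · intro i hi
        exact Finset.mem_powersetCard.2 ⟨Finset.erase_subset _ _,
          by rw [Finset.card_erase_of_mem hi]⟩
      · intro i hi j hj hij
        by_contra hne
        have h1 : i ∈ S.erase j := Finset.mem_erase.2 ⟨hne, hi⟩
        rw [← hij] at h1
        exact (Finset.mem_erase.1 h1).1 rfl
      · intro A hA
        rcases Finset.mem_powersetCard.1 hA with ⟨hAS, hAc⟩
        have : A.card < S.card := by omega
        rcases Finset.exists_of_ssubset (Finset.ssubset_iff_subset_ne.2
          ⟨hAS, fun hEq => by simp [hEq] at this⟩) with ⟨i, hiS, hiA⟩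
        refine ⟨i, hiS, ?_⟩
        refine (Finset.eq_of_subset_of_card_le
          (fun j hj => Finset.mem_erase.2 ⟨fun hji => hiA (by rwa [hji] at hj), hAS hj⟩) ?_).symm
        rw [Finset.card_erase_of_mem hiS, hAc]
      · intro i hi; rfl
    -- each summand is the constant (-(∏_{j∈S} z_j))^e
    have hterm : ∀ i ∈ S, (∑ j ∈ S.erase i, z j) ^ e * (∏ j ∈ S.erase i, z j) ^ e
        = (-(∏ j ∈ S, z j)) ^ e := by
      intro i hi
      have hsum' : ∑ j ∈ S.erase i, z j = - z i := by
        have := Finset.add_sum_erase S z hi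
        rw [hsumS] at this
        linear_combination this
      rw [hsum', ← mul_pow, ← Finset.mul_prod_erase S z hi]
      ring
    rw [hsplit, hbij, Finset.sum_congr rfl hterm, Finset.sum_const] at h
    have hCm : (m : ℂ) ≠ 0 := Nat.cast_ne_zero.2 (by omega)
    have hC : (-(∏ j ∈ S, z j)) ^ e = 0 := by
      rw [nsmul_eq_mul] at h
      rcases mul_eq_zero.1 h with h' | h'
      · exact absurd h' hCm
      · exact h'
    have := pow_eq_zero_iff heo |>.1 hC
    exact hprodS (neg_eq_zero.1 this)
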